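/- Let r > 0, d ≥ 1, and let μ_1, …, μ_d : [0,T] → (0,1] be continuous with Σ_{i=1}^d μ_i(t) = 1 for all t ∈ [0,T] and μ_i(0) ≤ 1/(r e) for every i; let m_i(t) := min_{0 ≤ s ≤ t} μ_i(s). With li_r(x) := ∫_0^x du/log(ru), set κ := −1 − Σ_i li_r(μ_i(0)), p := −log( max_{1 ≤ i ≤ d} { −r μ_i(0) log(r μ_i(0)) } ) + κ, Γ(t) := Σ_{i=1}^d ( m_i(t) − μ_i(0) + li_r(m_i(t)) − li_r(μ_i(0)) ), φ_i(t) := −p − log( −r m_i(t) log(r m_i(t)) ) + Γ(t), and V(t) := −p − Σ_{i=1}^d μ_i(t) log( −r m_i(t) log(r m_i(t)) ) + Γ(t). Then φ_i(t) ≥ 0 for every i = 1, …, d and every t ∈ [0,T] (the strategy is long-only), and V(t) ≥ 0 for every t ∈ [0,T]. -/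

import Mathlib

/-- The running minimum of `f` on `[0, t]`. -/
noncomputable def runMin (f : ℝ → ℝ) (t : ℝ) : ℝ :=
  sInf (f '' Set.Icc (0:ℝ) t)

/-- `li_r(x) := ∫_0^x du / log(ru)`. -/
noncomputable def lir (r x : ℝ) : ℝ :=
  ∫ u in (0:ℝ)..x, (Real.log (r * u))⁻¹

lemma negmullog_pos {c : ℝ} (hc : 0 < c) (hc' : c ≤ Real.exp (-1)) :
    0 < -(c * Real.log c) := by
  have : Real.log c ≤ -1 := by
    calc Real.log c ≤ Real.log (Real.exp (-1)) := Real.log_le_log hc hc'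
    _ = -1 := Real.log_exp _
  nlinarith

lemma negmullog_mono {a b : ℝ} (ha : 0 < a) (hab : a ≤ b) (hb : b ≤ Real.exp (-1)) :
    -(a * Real.log a) ≤ -(b * Real.log b) := by
  have hmono : MonotoneOn (fun x => -(x * Real.log x)) (Set.Icc 0 (Real.exp (-1))) := by
    apply monotoneOn_of_deriv_nonneg (convex_Icc _ _)
    · exact (Real.continuous_mul_log.neg).continuousOn
    · intro x hx
      rw [interior_Icc] at hx
      exact (((Real.hasDerivAt_mul_log hx.1.ne').neg).differentiableAt).differentiableWithinAt
    · intro x hx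
      rw [interior_Icc] at hx
      have hd : deriv (fun x => -(x * Real.log x)) x = -(Real.log x + 1) :=
        ((Real.hasDerivAt_mul_log hx.1.ne').neg).deriv
      rw [hd]
      have : Real.log x < -1 := by
        have := Real.log_lt_log hx.1 hx.2
        rwa [Real.log_exp] at this
      linarith
  exact hmono ⟨ha.le, hab.trans hb⟩ ⟨(ha.trans_le hab).le, hb⟩ hab

lemma lir_ge {r x : ℝ} (hr : 0 < r) (hx : 0 < x) (hx' : r * x ≤ Real.exp (-1)) :
    -x ≤ lir r x := by
  have hbound : ∀ u ∈ Set.Icc (0:ℝ) x, (-1 : ℝ) ≤ (Real.log (r * u))⁻¹ := by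
    intro u hu
    rcases eq_or_lt_of_le hu.1 with h | h
    · simp [← h]
    · have hru : 0 < r * u := mul_pos hr h
      have hle : Real.log (r * u) ≤ -1 := by
        calc Real.log (r * u) ≤ Real.log (r * x) :=
              Real.log_le_log hru (mul_le_mul_of_nonneg_left hu.2 hr.le)
        _ ≤ Real.log (Real.exp (-1)) := Real.log_le_log (mul_pos hr hx) hx'
        _ = -1 := Real.log_exp _
      have hne : Real.log (r * u) ≠ 0 := by linarith
      have h1 : Real.log (r * u) * (Real.log (r * u))⁻¹ = 1 := mul_inv_cancel₀ hne
      nlinarith [sq_nonneg ((Real.log (r * u))⁻¹ + 1)]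
  have hint : IntervalIntegrable (fun u => (Real.log (r * u))⁻¹) MeasureTheory.volume 0 x := by
    have hmeas : Measurable fun u : ℝ => (Real.log (r * u))⁻¹ :=
      (Real.measurable_log.comp (measurable_const_mul r)).inv
    rw [intervalIntegrable_iff_integrableOn_Ioc_of_le hx.le]
    apply MeasureTheory.Integrable.mono' ((MeasureTheory.integrableOn_const_iff (C := (1:ℝ))).2 (Or.inr measure_Ioc_lt_top))
      hmeas.aestronglyMeasurable.restrict
    rw [MeasureTheory.ae_restrict_iff' measurableSet_Ioc]
    filter_upwards with u hu
    have h1 := hbound u ⟨hu.1.le, hu.2⟩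
    have hru : 0 < r * u := mul_pos hr hu.1
    have hle : Real.log (r * u) ≤ -1 := by
      calc Real.log (r * u) ≤ Real.log (r * x) :=
            Real.log_le_log hru (mul_le_mul_of_nonneg_left hu.2 hr.le)
      _ ≤ Real.log (Real.exp (-1)) := Real.log_le_log (mul_pos hr hx) hx'
      _ = -1 := Real.log_exp _
    have h2 : (Real.log (r * u))⁻¹ < 0 := inv_lt_zero.mpr (by linarith)
    rw [Real.norm_eq_abs, abs_le]
    constructor <;> [exact h1; linarith]
  have hconst : IntervalIntegrable (fun _ : ℝ => (-1 : ℝ)) MeasureTheory.volume 0 x :=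
    intervalIntegrable_const
  have := intervalIntegral.integral_mono_on hx.le hconst hint hbound
  simp only [intervalIntegral.integral_const, smul_eq_mul, sub_zero, mul_neg_one] at this
  rw [lir]
  exact this

theorem iterated_entropy_long_only_and_nonnegative_value
    (r T : ℝ) (hr : 0 < r) (hT : 0 < T)
    (d : ℕ) (hd : 1 ≤ d) (w : Fin d → ℝ → ℝ)
    (hw_cont : ∀ i, ContinuousOn (w i) (Set.Icc (0:ℝ) T))
    (hw_mem : ∀ i, ∀ t ∈ Set.Icc (0:ℝ) T, w i t ∈ Set.Ioc (0:ℝ) 1)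
    (hw_sum : ∀ t ∈ Set.Icc (0:ℝ) T, ∑ i, w i t = 1)
    (hw_init : ∀ i, w i 0 ≤ 1 / (r * Real.exp 1))
    (m : Fin d → ℝ → ℝ) (hm : ∀ i t, m i t = runMin (w i) t)
    (κ : ℝ) (hκ : κ = -1 - ∑ i, lir r (w i 0))
    (p : ℝ)
    (hp : p = -Real.log (⨆ i, (-(r * w i 0) * Real.log (r * w i 0))) + κ)
    (Γ : ℝ → ℝ)
    (hΓ : ∀ t, Γ t = ∑ i, (m i t - w i 0 + lir r (m i t) - lir r (w i 0)))
    (φ : Fin d → ℝ → ℝ)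
    (hφ : ∀ i t, φ i t
      = -p - Real.log (-(r * m i t) * Real.log (r * m i t)) + Γ t)
    (V : ℝ → ℝ)
    (hV : ∀ t, V t
      = -p - (∑ i, w i t * Real.log (-(r * m i t) * Real.log (r * m i t))) + Γ t) :
    (∀ i, ∀ t ∈ Set.Icc (0:ℝ) T, 0 ≤ φ i t) ∧
      ∀ t ∈ Set.Icc (0:ℝ) T, 0 ≤ V t := by
  have h0T : (0:ℝ) ∈ Set.Icc (0:ℝ) T := ⟨le_refl 0, hT.le⟩
  haveI : Nonempty (Fin d) := ⟨⟨0, hd⟩⟩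
  -- bounds on the running minimum
  have hm_bounds : ∀ i, ∀ t ∈ Set.Icc (0:ℝ) T, 0 < m i t ∧ m i t ≤ w i 0 := by
    intro i t ht
    rw [hm, runMin]
    have h0t : (0:ℝ) ∈ Set.Icc (0:ℝ) t := ⟨le_refl 0, ht.1⟩
    have hsub : Set.Icc (0:ℝ) t ⊆ Set.Icc (0:ℝ) T := Set.Icc_subset_Icc le_rfl ht.2
    have hcont : ContinuousOn (w i) (Set.Icc (0:ℝ) t) := (hw_cont i).mono hsub
    obtain ⟨x, hx, hxmin⟩ := isCompact_Icc.exists_isMinOn ⟨0, h0t⟩ hcont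
    have hleast : IsLeast (w i '' Set.Icc (0:ℝ) t) (w i x) :=
      ⟨⟨x, hx, rfl⟩, by rintro y ⟨z, hz, rfl⟩; exact (isMinOn_iff.mp hxmin) z hz⟩
    rw [hleast.csInf_eq]
    exact ⟨(hw_mem i x (hsub hx)).1, (isMinOn_iff.mp hxmin) 0 h0t⟩
  have hw0_le : ∀ i, r * w i 0 ≤ Real.exp (-1) := by
    intro i
    have hrne : r ≠ 0 := hr.ne'
    have hene : Real.exp 1 ≠ 0 := (Real.exp_pos 1).ne'
    rw [Real.exp_neg]
    calc r * w i 0 ≤ r * (1 / (r * Real.exp 1)) :=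
          mul_le_mul_of_nonneg_left (hw_init i) hr.le
    _ = (Real.exp 1)⁻¹ := by field_simp
  -- the supremum S
  set S : ℝ := ⨆ i, (-(r * w i 0) * Real.log (r * w i 0)) with hS
  have hA0_pos : ∀ i, 0 < -(r * w i 0) * Real.log (r * w i 0) := by
    intro i
    have := negmullog_pos (mul_pos hr (hw_mem i 0 h0T).1) (hw0_le i)
    linarith [this, neg_mul (r * w i 0) (Real.log (r * w i 0))]
  have hA0_le_S : ∀ i, -(r * w i 0) * Real.log (r * w i 0) ≤ S := by
    intro i
    rw [hS]
    exact le_ciSup (Set.Finite.bddAbove (Set.finite_range (fun j => -(r * w j 0) * Real.log (r * w j 0)))) i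
  -- key: Γ t - κ = ∑ (m + lir m) ≥ 0  and  log S - log A_i(t) ≥ 0
  have hφ_key : ∀ i, ∀ t ∈ Set.Icc (0:ℝ) T, 0 ≤ φ i t := by
    intro i t ht
    have hmi := hm_bounds i t ht
    have hrm_pos : 0 < r * m i t := mul_pos hr hmi.1
    have hrm_le : r * m i t ≤ Real.exp (-1) :=
      le_trans (mul_le_mul_of_nonneg_left hmi.2 hr.le) (hw0_le i)
    have hAt_pos : 0 < -(r * m i t) * Real.log (r * m i t) := by
      have := negmullog_pos hrm_pos hrm_le
      linarith [neg_mul (r * m i t) (Real.log (r * m i t))]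
    have hAt_le : -(r * m i t) * Real.log (r * m i t)
        ≤ -(r * w i 0) * Real.log (r * w i 0) := by
      have := negmullog_mono hrm_pos (mul_le_mul_of_nonneg_left hmi.2 hr.le) (hw0_le i)
      linarith [neg_mul (r * m i t) (Real.log (r * m i t)),
        neg_mul (r * w i 0) (Real.log (r * w i 0))]
    have hlog : Real.log (-(r * m i t) * Real.log (r * m i t)) ≤ Real.log S :=
      Real.log_le_log hAt_pos (hAt_le.trans (hA0_le_S i))
    -- Γ t - κ
    have hsum1 : ∑ j, w j 0 = 1 := hw_sum 0 h0T
    have hΓκ : Γ t - κ = ∑ j, (m j t + lir r (m j t)) := by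
      rw [hΓ, hκ]
      have : ∑ j, (m j t - w j 0 + lir r (m j t) - lir r (w j 0))
          = ∑ j, (m j t + lir r (m j t)) - ∑ j, w j 0 - ∑ j, lir r (w j 0) := by
        simp only [Finset.sum_sub_distrib, Finset.sum_add_distrib]
        ring
      rw [this, hsum1]; ring
    have hΓκ_nonneg : 0 ≤ Γ t - κ := by
      rw [hΓκ]
      apply Finset.sum_nonneg
      intro j _
      have hmj := hm_bounds j t ht
      have hrmj : r * m j t ≤ Real.exp (-1) :=
        le_trans (mul_le_mul_of_nonneg_left hmj.2 hr.le) (hw0_le j)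
      have := lir_ge hr hmj.1 hrmj
      linarith
    rw [hφ, hp]
    linarith
  refine ⟨hφ_key, ?_⟩
  intro t ht
  have hVeq : V t = ∑ i, w i t * φ i t := by
    rw [hV]
    have hsum : ∑ i, w i t = 1 := hw_sum t ht
    have : ∑ i, w i t * φ i t
        = ∑ i, (w i t * (-p + Γ t)
            - w i t * Real.log (-(r * m i t) * Real.log (r * m i t))) := by
      apply Finset.sum_congr rfl
      intro i _
      rw [hφ]; ring
    rw [this, Finset.sum_sub_distrib, ← Finset.sum_mul, hsum]
    ring
  rw [hVeq]
  exact Finset.sum_nonneg fun i _ =>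
    mul_nonneg (hw_mem i t ht).1.le (hφ_key i t ht)
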